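/- Let d ≥ 1, let U_d be the uniform measure on the unit ball of R^d, let q̂ ∈ R^d be a unit vector, and let P = p(y)dy be a probability measure on R^d whose density satisfies p ≥ λ almost everywhere on B_1 for some λ > 0. Then there exists no Borel map T : R^d → R^d pushing P forward to U_d such that ⟨T(y) − q̂, y⟩ ≥ 0 for P-a.e. y ∈ R^d. -/

import Mathlib

open MeasureTheory Metric Set
open scoped ENNReal RealInnerProductSpace

/-- The surface area `H^{d-1}(S^{d-1})` of the unit sphere in `ℝ^d`. -/
noncomputable def sphereArea (d : ℕ) : ℝ :=
  (μH[(d : ℝ) - 1] (sphere (0 : EuclideanSpace ℝ (Fin d)) 1)).toReal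

/-- The density `u_d(x) = c_d / |x|^{d-1}` with `c_d = 1 / H^{d-1}(S^{d-1})`. -/
noncomputable def uDens (d : ℕ) (x : EuclideanSpace ℝ (Fin d)) : ℝ :=
  (sphereArea d)⁻¹ / ‖x‖ ^ (d - 1)

/-- The "uniform" measure `U_d` on the unit ball, with density `u_d` on `B_1` and `0` outside. -/
noncomputable def unifBall (d : ℕ) : Measure (EuclideanSpace ℝ (Fin d)) :=
  volume.withDensity
    ((ball (0 : EuclideanSpace ℝ (Fin d)) 1).indicator fun x => ENNReal.ofReal (uDens d x))

private lemma key_arith {δ t s Sf Se Q : ℝ} (hδ : 0 < δ)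
    (ht1 : 1/2 < t) (ht2 : t < 3/4) (hSe : Se < δ^2)
    (hSf0 : 0 ≤ Sf) (hw : s^2 + Sf ≤ 1) (hQ : Q^2 ≤ Sf * Se)
    (hmain : t ≤ s*t + Q) : 1 - 8*δ^2 ≤ s ∧ s ≤ 1 ∧ Sf ≤ 16*δ^2 := by
  have hs1 : s ≤ 1 := by nlinarith
  have ha0 := Real.sqrt_nonneg Sf
  have ha2 : Real.sqrt Sf ^ 2 = Sf := Real.sq_sqrt hSf0
  have h1 : Q ≤ Real.sqrt Sf * δ := by
    calc Q ≤ |Q| := le_abs_self _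
    _ = Real.sqrt (Q^2) := (Real.sqrt_sq_eq_abs Q).symm
    _ ≤ Real.sqrt (Sf * Se) := Real.sqrt_le_sqrt hQ
    _ = Real.sqrt Sf * Real.sqrt Se := Real.sqrt_mul hSf0 _
    _ ≤ Real.sqrt Sf * δ := by
        have : Real.sqrt Se ≤ δ := by
          rw [Real.sqrt_le_left hδ.le]; exact hSe.le
        exact mul_le_mul_of_nonneg_left this ha0
  have h2 : 1 - s ≤ 2*δ*Real.sqrt Sf := by
    nlinarith [mul_nonneg (sub_nonneg.2 hs1) (by linarith : (0:ℝ) ≤ t - 1/2)]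
  have h3 : Real.sqrt Sf ≤ 4*δ := by
    nlinarith [mul_nonneg ha0 ha0]
  refine ⟨by nlinarith, hs1, by nlinarith⟩

private lemma vol_prod (m : ℕ) {s : Set ℝ} (hs : MeasurableSet s)
    {C : Set (Fin m → ℝ)} (hC : MeasurableSet C) :
    volume {v : EuclideanSpace ℝ (Fin (m+1)) | v 0 ∈ s ∧ (fun j => v (Fin.succ j)) ∈ C} =
      volume s * volume C := by
  have h1 := EuclideanSpace.volume_preserving_symm_measurableEquiv_toLp (Fin (m+1))
  have h2 := measurePreserving_piFinSuccAbove (fun _ : Fin (m+1) => (volume : Measure ℝ)) 0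
  have h3 := (h2.comp h1).measure_preimage (hs.prod hC).nullMeasurableSet
  have h4 : ((MeasurableEquiv.piFinSuccAbove (fun _ : Fin (m+1) => ℝ) 0) ∘
      (MeasurableEquiv.toLp 2 (Fin (m+1) → ℝ)).symm) ⁻¹' (s ×ˢ C) =
      {v : EuclideanSpace ℝ (Fin (m+1)) | v 0 ∈ s ∧ (fun j => v (Fin.succ j)) ∈ C} := by
    ext v
    simp [MeasurableEquiv.piFinSuccAbove, Fin.removeNth, Fin.zero_succAbove,
      MeasurableEquiv.toLp, Fin.insertNthEquiv, Fin.tail]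
    exact Iff.rfl
  rw [h4] at h3
  rw [h3, Measure.prod_prod, volume_pi]

private lemma pi_ball_lt (m : ℕ) {r : ℝ} (hr : 0 < r) :
    volume {u : Fin m → ℝ | ∑ j, u j ^ 2 < r ^ 2} =
      volume (ball (0 : EuclideanSpace ℝ (Fin m)) r) := by
  have h := (EuclideanSpace.volume_preserving_symm_measurableEquiv_toLp (Fin m)).measure_preimage
    (s := {u : Fin m → ℝ | ∑ j, u j ^ 2 < r ^ 2}) ?_
  · rw [← h]
    congr 1
    ext x
    simp only [mem_preimage, mem_setOf_eq, mem_ball_zero_iff, EuclideanSpace.norm_eq]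
    rw [Real.sqrt_lt' hr]
    simp [MeasurableEquiv.toLp, Real.norm_eq_abs, sq_abs]
    exact Iff.rfl
  · refine (MeasurableSet.nullMeasurableSet ?_)
    exact measurableSet_lt (by fun_prop) measurable_const

private lemma pi_ball_le (m : ℕ) {r : ℝ} (hr : 0 ≤ r) :
    volume {u : Fin m → ℝ | ∑ j, u j ^ 2 ≤ r ^ 2} =
      volume (closedBall (0 : EuclideanSpace ℝ (Fin m)) r) := by
  have h := (EuclideanSpace.volume_preserving_symm_measurableEquiv_toLp (Fin m)).measure_preimage
    (s := {u : Fin m → ℝ | ∑ j, u j ^ 2 ≤ r ^ 2}) ?_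
  · rw [← h]
    congr 1
    ext x
    simp only [mem_preimage, mem_setOf_eq, mem_closedBall_zero_iff, EuclideanSpace.norm_eq]
    rw [Real.sqrt_le_left hr]
    simp [MeasurableEquiv.toLp, Real.norm_eq_abs, sq_abs]
    exact Iff.rfl
  · refine (MeasurableSet.nullMeasurableSet ?_)
    exact measurableSet_le (by fun_prop) measurable_const

private lemma norm_sq_eq_sum (m : ℕ) (v : EuclideanSpace ℝ (Fin m)) :
    ∑ i, v i ^ 2 = ‖v‖ ^ 2 := by
  rw [EuclideanSpace.norm_eq, Real.sq_sqrt (by positivity)]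
  simp [Real.norm_eq_abs, sq_abs]


set_option maxHeartbeats 2000000 in
/-- If `p ≥ λ > 0` a.e. on `B_1` and `|q̂| = 1`, there is no Borel map `T`
pushing `P` forward to `U_d` with `⟨T(y) − q̂, y⟩ ≥ 0` for `P`-a.e. `y`. -/
theorem stmt11 (d : ℕ) (hd : 1 ≤ d)
    (p : EuclideanSpace ℝ (Fin d) → ℝ)
    (P : Measure (EuclideanSpace ℝ (Fin d))) [IsProbabilityMeasure P]
    (hP : P = volume.withDensity fun y => ENNReal.ofReal (p y))
    (lam : ℝ) (hlam : 0 < lam)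
    (hplow : ∀ᵐ y ∂(volume : Measure (EuclideanSpace ℝ (Fin d))),
      y ∈ ball (0 : EuclideanSpace ℝ (Fin d)) 1 → lam ≤ p y)
    (qhat : EuclideanSpace ℝ (Fin d)) (hqhat : ‖qhat‖ = 1) :
    ¬ ∃ T : EuclideanSpace ℝ (Fin d) → EuclideanSpace ℝ (Fin d),
        Measurable T ∧ Measure.map T P = unifBall d ∧
        ∀ᵐ y ∂P, 0 ≤ ⟪T y - qhat, y⟫ := by
  
  rintro ⟨T, hTmeas, hTmap, hTmono⟩
  obtain ⟨m, rfl⟩ : ∃ m, d = m + 1 := ⟨d - 1, by omega⟩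
  -- an orthonormal basis with `b 0 = qhat`
  have hqon : Orthonormal ℝ (({0} : Set (Fin (m+1))).restrict fun _ => qhat) := by
    constructor
    · intro i; exact hqhat
    · intro i j hij; exact absurd (Subsingleton.elim i j) hij
  obtain ⟨b, hb⟩ := hqon.exists_orthonormalBasis_extension_of_card_eq (by simp) 
  have hb0 : b 0 = qhat := hb 0 rfl
  -- constants
  set c : ℝ := (sphereArea (m+1))⁻¹ with hc
  have hc0 : 0 ≤ c := inv_nonneg.2 ENNReal.toReal_nonneg
  set M : ℝ := c * 2 ^ m with hM
  have hM0 : 0 ≤ M := by positivity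
  set δ : ℝ := min (1/8) (Real.sqrt (lam / (64 * (M+1) * 4 ^ m))) with hδ
  have hδpos : 0 < δ := lt_min (by norm_num) (Real.sqrt_pos.2 (by positivity))
  have hδ18 : δ ≤ 1/8 := min_le_left _ _
  have hδsq : δ^2 ≤ lam / (64 * (M+1) * 4 ^ m) := by
    calc δ^2 ≤ (Real.sqrt (lam / (64 * (M+1) * 4 ^ m)))^2 := by
          have := min_le_right (1/8) (Real.sqrt (lam / (64 * (M+1) * 4 ^ m)))
          exact pow_le_pow_left₀ hδpos.le this 2
    _ = lam / (64 * (M+1) * 4 ^ m) := Real.sq_sqrt (by positivity)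
  -- sets
  set Clt : Set (Fin m → ℝ) := {u | ∑ j, u j ^ 2 < δ ^ 2} with hClt_def
  set Cle : Set (Fin m → ℝ) := {u | ∑ j, u j ^ 2 ≤ (4*δ) ^ 2} with hCle_def
  have hCltm : MeasurableSet Clt := measurableSet_lt (by fun_prop) measurable_const
  have hClem : MeasurableSet Cle := measurableSet_le (by fun_prop) measurable_const
  set AF : Set (EuclideanSpace ℝ (Fin (m+1))) :=
    {v | v 0 ∈ Ioo (1/2 : ℝ) (3/4) ∧ (fun j => v (Fin.succ j)) ∈ Clt} with hAF_def
  set NF : Set (EuclideanSpace ℝ (Fin (m+1))) :=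
    {v | v 0 ∈ Icc (1 - 8*δ^2 : ℝ) 1 ∧ (fun j => v (Fin.succ j)) ∈ Cle} with hNF_def
  have hmeas0 : Measurable (fun v : EuclideanSpace ℝ (Fin (m+1)) => v 0) :=
    (measurable_pi_apply 0).comp (MeasurableEquiv.toLp 2 (Fin (m+1) → ℝ)).symm.measurable
  have hmeasS : Measurable (fun (v : EuclideanSpace ℝ (Fin (m+1))) (j : Fin m) =>
      v (Fin.succ j)) :=
    measurable_pi_lambda _ fun j =>
      (measurable_pi_apply j.succ).comp (MeasurableEquiv.toLp 2 (Fin (m+1) → ℝ)).symm.measurable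
  have hAFm : MeasurableSet AF := (hmeas0 measurableSet_Ioo).inter (hmeasS hCltm)
  have hNFm : MeasurableSet NF := (hmeas0 measurableSet_Icc).inter (hmeasS hClem)
  set A : Set (EuclideanSpace ℝ (Fin (m+1))) := ⇑b.repr ⁻¹' AF with hA_def
  set N : Set (EuclideanSpace ℝ (Fin (m+1))) := ⇑b.repr ⁻¹' NF with hN_def
  have hreprm : Measurable (⇑b.repr) := b.repr.continuous.measurable
  have hAm : MeasurableSet A := hreprm hAFm
  have hNm : MeasurableSet N := hreprm hNFm
  -- A ⊆ ball 0 1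
  have hAball : A ⊆ ball (0 : EuclideanSpace ℝ (Fin (m+1))) 1 := by
    intro y hy
    obtain ⟨⟨h1, h2⟩, h3⟩ := hy
    rw [mem_ball_zero_iff, ← b.repr.norm_map y]
    set v := b.repr y
    have hsum : ∑ i, v i ^ 2 = ‖v‖^2 := norm_sq_eq_sum _ v
    rw [Fin.sum_univ_succ] at hsum
    have h3' : ∑ j, v (Fin.succ j) ^ 2 < δ ^ 2 := h3
    have : δ^2 ≤ 1/64 := by nlinarith
    nlinarith [norm_nonneg v]
  -- T y lands in the ball a.e.
  have hub_c : unifBall (m+1) (ball (0 : EuclideanSpace ℝ (Fin (m+1))) 1)ᶜ = 0 := by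
    rw [unifBall, withDensity_apply _ measurableSet_ball.compl]
    rw [setLIntegral_congr_fun measurableSet_ball.compl
      (fun x (hx : x ∈ (ball (0 : EuclideanSpace ℝ (Fin (m+1))) 1)ᶜ) =>
        indicator_of_notMem (by simpa using hx) _)]
    simp
  have hTball : ∀ᵐ y ∂P, T y ∈ ball (0 : EuclideanSpace ℝ (Fin (m+1))) 1 := by
    have h0 : P (T ⁻¹' (ball (0 : EuclideanSpace ℝ (Fin (m+1))) 1)ᶜ) = 0 := by
      rw [← Measure.map_apply hTmeas measurableSet_ball.compl, hTmap, hub_c]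
    have hset : {y | ¬ T y ∈ ball (0 : EuclideanSpace ℝ (Fin (m+1))) 1} =
        T ⁻¹' (ball (0 : EuclideanSpace ℝ (Fin (m+1))) 1)ᶜ := by ext y; simp
    rw [ae_iff, hset]
    exact h0
  -- pointwise key implication
  have hkey : ∀ y : EuclideanSpace ℝ (Fin (m+1)), y ∈ A → T y ∈ ball (0 : EuclideanSpace ℝ (Fin (m+1))) 1 → 0 ≤ ⟪T y - qhat, y⟫ → T y ∈ N := by
    intro y hyA hyb hin
    set v := b.repr y with hv
    set w := b.repr (T y) with hw
    have hq' : b.repr qhat = EuclideanSpace.single 0 1 := by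
      rw [← hb0]; exact b.repr_self 0
    have hip : ⟪T y - qhat, y⟫ = (∑ i, w i * v i) - v 0 := by
      have h5 : ⟪T y - qhat, y⟫ = ⟪w - EuclideanSpace.single 0 1, v⟫ := by
        rw [← b.repr.inner_map_map (T y - qhat) y, map_sub, hq']
      have h7 : ⟪w, v⟫ = ∑ i, w i * v i := by
        rw [PiLp.inner_apply]
        exact Finset.sum_congr rfl fun i _ => by simp [RCLike.inner_apply]; ring
      rw [h5, inner_sub_left, h7, EuclideanSpace.inner_single_left]
      simp
    obtain ⟨⟨ht1, ht2⟩, hSe⟩ := hyA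
    have hSe' : ∑ j, v (Fin.succ j) ^ 2 < δ ^ 2 := hSe
    have hcs : (∑ j, w (Fin.succ j) * v (Fin.succ j)) ^ 2 ≤
        (∑ j, w (Fin.succ j) ^ 2) * (∑ j, v (Fin.succ j) ^ 2) :=
      Finset.sum_mul_sq_le_sq_mul_sq _ _ _
    have hwn : w 0 ^ 2 + ∑ j, w (Fin.succ j) ^ 2 ≤ 1 := by
      have hsum : ∑ i, w i ^ 2 = ‖w‖^2 := norm_sq_eq_sum _ w
      rw [Fin.sum_univ_succ] at hsum
      have : ‖w‖ = ‖T y‖ := b.repr.norm_map (T y)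
      have hTy1 : ‖T y‖ < 1 := mem_ball_zero_iff.1 hyb
      nlinarith [norm_nonneg (T y)]
    have hmain : v 0 ≤ w 0 * v 0 + ∑ j, w (Fin.succ j) * v (Fin.succ j) := by
      rw [hip, Fin.sum_univ_succ] at hin
      linarith
    obtain ⟨hw1, hw2, hw3⟩ := key_arith hδpos ht1 ht2 hSe'
      (Finset.sum_nonneg fun j _ => sq_nonneg _) hwn hcs hmain
    refine ⟨⟨hw1, hw2⟩, ?_⟩
    show ∑ j, w (Fin.succ j) ^ 2 ≤ (4*δ)^2
    exact hw3.trans_eq (by ring)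
  -- lower bound on P A
  have hPA_lb : ENNReal.ofReal lam * volume A ≤ P A := by
    rw [hP, withDensity_apply _ hAm]
    calc ENNReal.ofReal lam * volume A = ∫⁻ _ in A, ENNReal.ofReal lam ∂volume := by
          rw [setLIntegral_const, mul_comm]
    _ ≤ ∫⁻ y in A, ENNReal.ofReal (p y) ∂volume := by
        refine lintegral_mono_ae ((ae_restrict_iff' hAm).2 (hplow.mono fun y h hyA => ?_))
        exact ENNReal.ofReal_le_ofReal (h (hAball hyA))
  -- P A ≤ unifBall N
  have hPA_ub : P A ≤ unifBall (m+1) N := by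
    have hae : A ≤ᵐ[P] T ⁻¹' N := by
      filter_upwards [hTball, hTmono] with y h1 h2 hyA
      exact hkey y hyA h1 h2
    calc P A ≤ P (T ⁻¹' N) := measure_mono_ae hae
    _ = unifBall (m+1) N := by rw [← Measure.map_apply hTmeas hNm, hTmap]
  -- upper bound on unifBall N
  have hN_ub : unifBall (m+1) N ≤ ENNReal.ofReal M * volume N := by
    rw [unifBall, withDensity_apply _ hNm]
    calc ∫⁻ x in N, (ball (0 : EuclideanSpace ℝ (Fin (m+1))) 1).indicator (fun x => ENNReal.ofReal (uDens (m+1) x)) x ∂volume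
        ≤ ∫⁻ _ in N, ENNReal.ofReal M ∂volume := by
          refine lintegral_mono_ae ((ae_restrict_iff' hNm).2 (ae_of_all _ fun x hxN => ?_))
          by_cases hxb : x ∈ ball (0 : EuclideanSpace ℝ (Fin (m+1))) 1
          · rw [indicator_of_mem hxb]
            refine ENNReal.ofReal_le_ofReal ?_
            obtain ⟨⟨hx1, hx2⟩, _⟩ := hxN
            have hx12 : (1/2 : ℝ) ≤ b.repr x 0 := by nlinarith
            have hnx : (1/2 : ℝ) ≤ ‖x‖ := by
              have h1 : (b.repr x 0)^2 ≤ ∑ i, (b.repr x) i ^ 2 :=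
                Finset.single_le_sum (f := fun i => (b.repr x) i ^ 2)
                  (fun i _ => sq_nonneg _) (Finset.mem_univ 0)
              have h2 : ∑ i, (b.repr x) i ^ 2 = ‖b.repr x‖^2 := norm_sq_eq_sum _ _
              rw [b.repr.norm_map x] at h2
              nlinarith [norm_nonneg x]
            show uDens (m+1) x ≤ M
            have hpow : (1/2 : ℝ)^m ≤ ‖x‖^m := pow_le_pow_left₀ (by norm_num) hnx m
            calc uDens (m+1) x = c / ‖x‖^m := by rw [uDens]; norm_num; rfl
            _ ≤ c / (1/2 : ℝ)^m := by
                apply div_le_div_of_nonneg_left hc0 (by positivity) hpow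
            _ = M := by rw [hM, div_eq_mul_inv, one_div, inv_pow, inv_inv]
          · rw [indicator_of_notMem hxb]; exact zero_le
    _ = ENNReal.ofReal M * volume N := by rw [setLIntegral_const, mul_comm]
  -- volume computations
  set V : ℝ≥0∞ := volume (ball (0 : EuclideanSpace ℝ (Fin m)) 1) with hV
  have hV0 : V ≠ 0 := (measure_ball_pos _ _ one_pos).ne'
  have hVtop : V ≠ ⊤ := measure_ball_lt_top.ne
  have hfr : Module.finrank ℝ (EuclideanSpace ℝ (Fin m)) = m := finrank_euclideanSpace_fin
  have hvolA : volume A = ENNReal.ofReal (1/4) * (ENNReal.ofReal (δ^m) * V) := by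
    rw [hA_def, b.measurePreserving_repr.measure_preimage hAFm.nullMeasurableSet,
      hAF_def, vol_prod m measurableSet_Ioo hCltm, Real.volume_Ioo,
      hClt_def, pi_ball_lt m hδpos,
      Measure.addHaar_ball_of_pos _ _ hδpos, hfr]
    norm_num
    rfl
  have hvolN : volume N = ENNReal.ofReal (8*δ^2) * (ENNReal.ofReal ((4*δ)^m) * V) := by
    rw [hN_def, b.measurePreserving_repr.measure_preimage hNFm.nullMeasurableSet,
      hNF_def, vol_prod m measurableSet_Icc hClem, Real.volume_Icc,
      hCle_def, pi_ball_le m (by positivity),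
      Measure.addHaar_closedBall _ _ (by positivity), hfr]
    norm_num [show (1 : ℝ) - (1 - 8*δ^2) = 8*δ^2 by ring]
    rfl
  -- combine
  have hchain : ENNReal.ofReal (lam * (1/4) * δ^m) * V ≤
      ENNReal.ofReal (M * (8*δ^2) * (4*δ)^m) * V := by
    have h := hPA_lb.trans (hPA_ub.trans hN_ub)
    rw [hvolA, hvolN] at h
    calc ENNReal.ofReal (lam * (1/4) * δ^m) * V
        = ENNReal.ofReal lam * (ENNReal.ofReal (1/4) * (ENNReal.ofReal (δ^m) * V)) := by
          rw [ENNReal.ofReal_mul (p := lam * (1/4)) (by positivity),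
            ENNReal.ofReal_mul (p := lam) hlam.le]; ring
    _ ≤ ENNReal.ofReal M * (ENNReal.ofReal (8*δ^2) * (ENNReal.ofReal ((4*δ)^m) * V)) := h
    _ = ENNReal.ofReal (M * (8*δ^2) * (4*δ)^m) * V := by
          rw [ENNReal.ofReal_mul (p := M * (8*δ^2)) (by positivity),
            ENNReal.ofReal_mul (p := M) hM0]; ring
  have hreal : lam * (1/4) * δ^m ≤ M * (8*δ^2) * (4*δ)^m := by
    have h2 := (ENNReal.mul_le_mul_iff_left hV0 hVtop).1 hchain
    exact (ENNReal.ofReal_le_ofReal_iff (by positivity)).1 h2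
  -- final contradiction
  have hδm : (0:ℝ) < δ^m := by positivity
  have h4m : (0:ℝ) < 4^m := by positivity
  have hkey2 : lam * (1/4) ≤ M * (8*δ^2) * 4^m := by
    have h' : (lam * (1/4)) * δ^m ≤ (M * (8*δ^2) * 4^m) * δ^m := by
      calc (lam * (1/4)) * δ^m ≤ M * (8*δ^2) * (4*δ)^m := hreal
      _ = (M * (8*δ^2) * 4^m) * δ^m := by rw [mul_pow]; ring
    exact le_of_mul_le_mul_right h' hδm
  have hX : δ^2 * (64 * (M+1) * 4^m) ≤ lam := by
    rw [div_eq_mul_inv] at hδsq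
    calc δ^2 * (64 * (M+1) * 4^m) ≤ (lam * (64 * (M+1) * 4^m)⁻¹) * (64 * (M+1) * 4^m) := by
          apply mul_le_mul_of_nonneg_right hδsq (by positivity)
    _ = lam := by field_simp
  have hfin : lam * (1/4) ≤ lam / 8 := by
    calc lam * (1/4) ≤ M * (8*δ^2) * 4^m := hkey2
    _ ≤ (M+1) * (8*δ^2) * 4^m := by
        have h1 : (0:ℝ) ≤ 8*δ^2 := by positivity
        nlinarith
    _ = (δ^2 * (64*(M+1)*4^m))/8 := by ring
    _ ≤ lam/8 := by linarith
  linarith
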